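/- Let φ(z) = 1/((z+1)·log(z+1)) for z > 0. Then for all 0 < x < y, it holds that y/x ≤ φ(x)/φ(y) ≤ (y/x)². -/

import Mathlib

open Real Set

private lemma hd_num (z : ℝ) (hz : 0 < z) :
    HasDerivAt (fun z : ℝ => (z + 1) * Real.log (z + 1)) (Real.log (z + 1) + 1) z := by
  have h1 : HasDerivAt (fun z : ℝ => z + 1) 1 z := (hasDerivAt_id z).add_const 1
  have h2 : HasDerivAt (fun z : ℝ => Real.log (z + 1)) ((z + 1)⁻¹ * 1) z :=
    (Real.hasDerivAt_log (by linarith)).comp z h1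
  have h3 : HasDerivAt (fun z : ℝ => (z + 1) * Real.log (z + 1))
      (1 * Real.log (z + 1) + (z + 1) * ((z + 1)⁻¹ * 1)) z := h1.mul h2
  convert h3 using 1
  have hz1 : z + 1 ≠ 0 := by linarith
  simp [hz1]

private lemma log_lb (z : ℝ) (hz : 0 < z) : z / (z + 1) ≤ Real.log (z + 1) := by
  have h1 : Real.log ((z + 1)⁻¹) ≤ (z + 1)⁻¹ - 1 :=
    Real.log_le_sub_one_of_pos (by positivity)
  rw [Real.log_inv] at h1
  have hz1 : (0:ℝ) < z + 1 := by linarith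
  have hc : (z + 1)⁻¹ * (z + 1) = 1 := inv_mul_cancel₀ (ne_of_gt hz1)
  rw [div_le_iff₀ hz1]
  nlinarith [mul_le_mul_of_nonneg_right (neg_le_neg h1) hz1.le]

private lemma cont_num : ContinuousOn (fun z : ℝ => (z + 1) * Real.log (z + 1)) (Ioi 0) := by
  intro z hz
  have hz' : (0:ℝ) < z := hz
  have hadd : ContinuousAt (fun w : ℝ => w + 1) z := continuousAt_id.add continuousAt_const
  have hlog : ContinuousAt (fun w : ℝ => Real.log (w + 1)) z := by
    have : ContinuousAt (Real.log ∘ (fun w : ℝ => w + 1)) z :=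
      ContinuousAt.comp (x := z) (g := Real.log) (f := fun w : ℝ => w + 1)
        (Real.continuousAt_log (show z + 1 ≠ 0 by linarith)) hadd
    exact this
  exact (hadd.mul hlog).continuousWithinAt

private lemma g_mono : MonotoneOn (fun z : ℝ => (z + 1) * Real.log (z + 1) / z) (Ioi 0) := by
  have hder : ∀ z ∈ Ioi (0:ℝ),
      HasDerivAt (fun z : ℝ => (z + 1) * Real.log (z + 1) / z)
        (((Real.log (z + 1) + 1) * z - (z + 1) * Real.log (z + 1) * 1) / z ^ 2) z := by
    intro z hz
    exact (hd_num z hz).div (hasDerivAt_id z) (ne_of_gt hz)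
  apply monotoneOn_of_deriv_nonneg (convex_Ioi 0)
  · exact cont_num.div continuousOn_id (fun z hz => ne_of_gt hz)
  · rw [interior_Ioi]
    exact fun z hz => ((hder z hz).differentiableAt).differentiableWithinAt
  · rw [interior_Ioi]
    intro z hz
    rw [(hder z hz).deriv]
    have hz' : (0:ℝ) < z := hz
    have hlog : Real.log (z + 1) ≤ z := by
      have := Real.log_le_sub_one_of_pos (show (0:ℝ) < z + 1 by linarith)
      linarith
    have : (Real.log (z + 1) + 1) * z - (z + 1) * Real.log (z + 1) * 1
        = z - Real.log (z + 1) := by ring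
    rw [this]
    exact div_nonneg (by linarith) (by positivity)

private lemma h_anti : AntitoneOn (fun z : ℝ => (z + 1) * Real.log (z + 1) / z ^ 2) (Ioi 0) := by
  have hder : ∀ z ∈ Ioi (0:ℝ),
      HasDerivAt (fun z : ℝ => (z + 1) * Real.log (z + 1) / z ^ 2)
        (((Real.log (z + 1) + 1) * z ^ 2 - (z + 1) * Real.log (z + 1) * (2 * z)) / (z ^ 2) ^ 2)
        z := by
    intro z hz
    have hz' : (0:ℝ) < z := hz
    have hsq : HasDerivAt (fun z : ℝ => z ^ 2) (2 * z) z := by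
      simpa [Nat.cast_ofNat, mul_comm] using hasDerivAt_pow 2 z
    exact (hd_num z hz).div hsq (by positivity)
  apply antitoneOn_of_deriv_nonpos (convex_Ioi 0)
  · exact cont_num.div (continuousOn_id.pow 2) (fun z hz => pow_ne_zero 2 (ne_of_gt (Set.mem_Ioi.mp hz)))
  · rw [interior_Ioi]
    exact fun z hz => ((hder z hz).differentiableAt).differentiableWithinAt
  · rw [interior_Ioi]
    intro z hz
    rw [(hder z hz).deriv]
    have hz' : (0:ℝ) < z := hz
    have hlb := log_lb z hz'
    have hz1 : (0:ℝ) < z + 1 := by linarith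
    have hnum : (Real.log (z + 1) + 1) * z ^ 2 - (z + 1) * Real.log (z + 1) * (2 * z) ≤ 0 := by
      have h1 : z * (z + 2) * (z / (z + 1)) ≤ z * (z + 2) * Real.log (z + 1) :=
        mul_le_mul_of_nonneg_left hlb (by positivity)
      have h2 : z ^ 2 ≤ z * (z + 2) * (z / (z + 1)) := by
        rw [mul_div_assoc', le_div_iff₀ hz1]
        nlinarith [sq_nonneg z]
      nlinarith [h1, h2]
    have hden : (0:ℝ) < (z ^ 2) ^ 2 := by positivity
    exact div_nonpos_of_nonpos_of_nonneg hnum hden.le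

/-- For `φ(z) = 1/((z+1) log(z+1))` and `0 < x < y`:
`y/x ≤ φ(x)/φ(y) ≤ (y/x)²`. -/
theorem stmt13 (x y : ℝ) (hx : 0 < x) (hxy : x < y) :
    y / x ≤ (1 / ((x + 1) * Real.log (x + 1))) / (1 / ((y + 1) * Real.log (y + 1))) ∧
    (1 / ((x + 1) * Real.log (x + 1))) / (1 / ((y + 1) * Real.log (y + 1))) ≤ (y / x) ^ 2 := by
  have hy : 0 < y := lt_trans hx hxy
  have hA : 0 < (x + 1) * Real.log (x + 1) := by
    have := Real.log_pos (show (1:ℝ) < x + 1 by linarith)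
    positivity
  have hB : 0 < (y + 1) * Real.log (y + 1) := by
    have := Real.log_pos (show (1:ℝ) < y + 1 by linarith)
    positivity
  have hratio : (1 / ((x + 1) * Real.log (x + 1))) / (1 / ((y + 1) * Real.log (y + 1)))
      = ((y + 1) * Real.log (y + 1)) / ((x + 1) * Real.log (x + 1)) := by
    field_simp
  rw [hratio]
  constructor
  · have hg := g_mono (show x ∈ Ioi (0:ℝ) from hx) (show y ∈ Ioi (0:ℝ) from hy) hxy.le
    simp only at hg
    rw [div_le_div_iff₀ hx hy] at hg
    rw [div_le_div_iff₀ hx hA]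
    nlinarith [hg]
  · have hh := h_anti (show x ∈ Ioi (0:ℝ) from hx) (show y ∈ Ioi (0:ℝ) from hy) hxy.le
    simp only at hh
    rw [div_le_div_iff₀ (by positivity) (by positivity)] at hh
    rw [div_pow, div_le_div_iff₀ hA (by positivity)]
    nlinarith [hh]
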